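/- Let m be a positive divisor of p and let H_1, …, H_m ≤ G be subgroups such that for all 1 ≤ i ≤ m and 1 ≤ k ≤ p−1, |G| divides |H_i| · |H_{σ_k(i)}| and the quotient |H_i|·|H_{σ_k(i)}|/|G| is a perfect square, where σ_k(i) ∈ {1,…,m} is the residue of i + k modulo m. Then there exists an irreducible NIM-rep of R_{p,G} on the set L = ⊔_{i=1}^m G/H_i with the natural left G-action, in which for x ∈ G/H_i and y ∈ G/H_j one has N_k(x, y) = √(|H_i|·|H_j|/|G|) if j = σ_k(i), and N_k(x, y) = 0 otherwise. -/

import Mathlib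

open scoped BigOperators

/-- A NIM-rep of the Jordan–Larson fusion ring `R_{p,G}`: a finite set `L` with a
`G`-action together with multiplicity functions `N k : L → L → ℕ` for `1 ≤ k ≤ p-1`
(indices read modulo `p`), satisfying the axioms coming from the fusion rules. -/
structure JLNimRep (p : ℕ) (G : Type*) [Group G] [Fintype G]
    (L : Type*) [Fintype L] [MulAction G L] where
  N : ℕ → L → L → ℕ
  smul_left : ∀ (k : ℕ), 1 ≤ k → k ≤ p - 1 → ∀ (g : G) (ℓ ℓ' : L),
    N k (g • ℓ) ℓ' = N k ℓ ℓ'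
  smul_right : ∀ (k : ℕ), 1 ≤ k → k ≤ p - 1 → ∀ (g : G) (ℓ ℓ' : L),
    N k ℓ (g • ℓ') = N k ℓ ℓ'
  dual_symm : ∀ (k : ℕ), 1 ≤ k → k ≤ p - 1 → ∀ (ℓ ℓ' : L),
    N k ℓ ℓ' = N (p - k) ℓ' ℓ
  fusion : ∀ (i j : ℕ), 1 ≤ i → i ≤ p - 1 → 1 ≤ j → j ≤ p - 1 → (i + j) % p ≠ 0 →
    ∀ (ℓ ℓ' : L), ∑ t : L, N j ℓ t * N i t ℓ' =
      Nat.sqrt (Fintype.card G) * N ((i + j) % p) ℓ ℓ'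
  fusion_dual : ∀ (i : ℕ), 1 ≤ i → i ≤ p - 1 → ∀ (ℓ ℓ' : L),
    ∑ t : L, N i ℓ t * N (p - i) t ℓ' = Nat.card {g : G // g • ℓ = ℓ'}

/-- Irreducibility of a NIM-rep: the only nonempty subset closed under the `G`-action
and under the supports of all `N k` (`1 ≤ k ≤ p-1`) is the whole set. -/
def JLNimRep.Irreducible {p : ℕ} {G : Type*} [Group G] [Fintype G]
    {L : Type*} [Fintype L] [MulAction G L] (M : JLNimRep p G L) : Prop :=
  ∀ S : Set L, S.Nonempty →
    (∀ (g : G) (ℓ : L), ℓ ∈ S → g • ℓ ∈ S) →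
    (∀ (k : ℕ), 1 ≤ k → k ≤ p - 1 → ∀ (ℓ ℓ' : L), ℓ ∈ S → 0 < M.N k ℓ ℓ' → ℓ' ∈ S) →
    S = Set.univ

/-- The natural `G`-action on the disjoint union `⊔ᵢ G/Hᵢ`. -/
instance sigmaQuotMulAction (G : Type*) [Group G] {m : ℕ} (H : Fin m → Subgroup G) :
    MulAction G ((i : Fin m) × (G ⧸ H i)) where
  smul g x := ⟨x.1, g • x.2⟩
  one_smul := by
    rintro ⟨i, y⟩
    show (⟨i, (1 : G) • y⟩ : (i : Fin m) × (G ⧸ H i)) = ⟨i, y⟩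
    rw [one_smul]
  mul_smul g h := by
    rintro ⟨i, y⟩
    show (⟨i, (g * h) • y⟩ : (i : Fin m) × (G ⧸ H i)) = ⟨i, g • h • y⟩
    rw [mul_smul]


noncomputable instance sigmaQuotFintype (G : Type*) [Group G] [Fintype G] {m : ℕ}
    (H : Fin m → Subgroup G) : Fintype ((i : Fin m) × (G ⧸ H i)) :=
  Fintype.ofFinite _

lemma jl_card_smul_quot {G : Type*} [Group G] (H : Subgroup G) (q q' : G ⧸ H) :
    Nat.card {g : G // g • q = q'} = Nat.card H := by
  obtain ⟨a, rfl⟩ := QuotientGroup.mk_surjective q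
  obtain ⟨b, rfl⟩ := QuotientGroup.mk_surjective q'
  refine Nat.card_congr ⟨fun g => ⟨((g : G) * a)⁻¹ * b, ?_⟩,
    fun h => ⟨b * (h : G)⁻¹ * a⁻¹, ?_⟩, ?_, ?_⟩
  · have := g.2
    simp only [show (g : G) • ((a : G ⧸ H)) = (((g : G) * a : G) : G ⧸ H) from rfl] at this
    exact (QuotientGroup.eq).mp this
  · show (((b * (h : G)⁻¹ * a⁻¹) * a : G) : G ⧸ H) = (b : G ⧸ H)
    rw [QuotientGroup.eq]
    group
    simp [h.2]
  · intro g; ext; simp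
  · intro h; ext; simp

lemma jl_sum_sigma_const {ι : Type*} [Fintype ι] (β : ι → Type*) [∀ i, Fintype (β i)]
    [inst : Fintype (Σ i, β i)] (F : ι → ℕ) :
    ∑ x : Σ i, β i, F x.1 = ∑ i, (Fintype.card (β i)) * F i := by
  rw [Subsingleton.elim inst (Sigma.instFintype)]
  rw [← Finset.univ_sigma_univ, Finset.sum_sigma]
  simp [Finset.sum_const, mul_comm]

noncomputable def JLc {G : Type*} [Group G] [Fintype G] {m : ℕ} (H : Fin m → Subgroup G)
    (a b : Fin m) : ℕ :=
  Nat.sqrt (Nat.card (H a) * Nat.card (H b) / Fintype.card G)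

lemma JLc_comm {G : Type*} [Group G] [Fintype G] {m : ℕ} (H : Fin m → Subgroup G) (a b : Fin m) :
    JLc H a b = JLc H b a := by
  simp [JLc, Nat.mul_comm]

/-- given a positive divisor `m` of `p` and subgroups `H₁,…,Hₘ ≤ G`
satisfying the square condition, there is an irreducible NIM-rep of `R_{p,G}` on
`⊔ᵢ G/Hᵢ` with the stated multiplicities, where `σₖ(i) = (i + k) mod m`. -/
theorem stmt4 (p : ℕ) (hp : 2 ≤ p) (G : Type*) [Group G] [Fintype G]
    (hG : IsSquare (Fintype.card G))
    (m : ℕ) (hm : 0 < m) (hmp : m ∣ p) (H : Fin m → Subgroup G)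
    (hH : ∀ (i : Fin m) (k : ℕ), 1 ≤ k → k ≤ p - 1 →
      Fintype.card G ∣
        Nat.card (H i) * Nat.card (H ⟨((i : ℕ) + k) % m, Nat.mod_lt _ hm⟩) ∧
      IsSquare (Nat.card (H i) * Nat.card (H ⟨((i : ℕ) + k) % m, Nat.mod_lt _ hm⟩)
        / Fintype.card G)) :
    ∃ M : JLNimRep p G ((i : Fin m) × (G ⧸ H i)), M.Irreducible ∧
      ∀ (k : ℕ), 1 ≤ k → k ≤ p - 1 → ∀ (x y : (i : Fin m) × (G ⧸ H i)),
        M.N k x y =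
          if (y.1 : ℕ) = ((x.1 : ℕ) + k) % m
          then Nat.sqrt (Nat.card (H x.1) * Nat.card (H y.1) / Fintype.card G)
          else 0 := by
  classical
  letI : ∀ l : Fin m, Fintype (G ⧸ H l) := fun l => Fintype.ofFinite _
  obtain ⟨n0, hn0⟩ := hG
  have hcG : 0 < Fintype.card G := Fintype.card_pos
  set n : ℕ := Nat.sqrt (Fintype.card G) with hn
  have hnn : n * n = Fintype.card G := by rw [hn, hn0, Nat.sqrt_eq]
  set σ : ℕ → Fin m → Fin m := fun k i => ⟨((i : ℕ) + k) % m, Nat.mod_lt _ hm⟩ with hσ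
  have hσval : ∀ (k : ℕ) (i : Fin m), ((σ k i : Fin m) : ℕ) = ((i : ℕ) + k) % m :=
    fun k i => rfl
  have key : ∀ (i : Fin m) (k : ℕ), 1 ≤ k → k ≤ p - 1 →
      JLc H i (σ k i) * JLc H i (σ k i) * Fintype.card G
        = Nat.card (H i) * Nat.card (H (σ k i)) := by
    intro i k hk1 hk2
    obtain ⟨hdvd, d, hd⟩ := hH i k hk1 hk2
    have hc : JLc H i (σ k i) = d := by
      rw [JLc]
      rw [show (σ k i) = ⟨((i : ℕ) + k) % m, Nat.mod_lt _ hm⟩ from rfl]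
      rw [hd, Nat.sqrt_eq]
    rw [hc, ← hd, Nat.div_mul_cancel hdvd]
  have hHpos : ∀ i : Fin m, 0 < Nat.card (H i) := fun i => Nat.card_pos
  have cpos : ∀ (i : Fin m) (k : ℕ), 1 ≤ k → k ≤ p - 1 → 0 < JLc H i (σ k i) := by
    intro i k hk1 hk2
    rcases Nat.eq_zero_or_pos (JLc H i (σ k i)) with h0 | h
    · exfalso
      have hk := key i k hk1 hk2
      rw [h0] at hk
      simp only [Nat.zero_mul, Nat.mul_zero] at hk
      exact absurd hk.symm (Nat.mul_ne_zero (hHpos i).ne' (hHpos _).ne')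
    · exact h
  have modshift : ∀ (k : ℕ), 1 ≤ k → k ≤ p - 1 → ∀ a : ℕ,
      ((a + k) % m + (p - k)) % m = a % m := by
    intro k hk1 hk2 a
    obtain ⟨t, ht⟩ := hmp
    rw [Nat.mod_add_mod]
    have h1 : a + k + (p - k) = a + m * t := by omega
    rw [h1, Nat.add_mul_mod_self_left]
  have modp : ∀ (i j : ℕ), ∀ a : ℕ, ((a + j) % m + i) % m = (a + (i + j) % p) % m := by
    intro i j a
    obtain ⟨t, ht⟩ := hmp
    rw [Nat.mod_add_mod]
    have h1 : p * ((i + j) / p) + (i + j) % p = i + j := Nat.div_add_mod _ _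
    have h2 : a + j + i = a + (i + j) % p + m * (t * ((i + j) / p)) := by
      have h3 : m * (t * ((i + j) / p)) = p * ((i + j) / p) := by rw [ht]; ring
      omega
    rw [h2, Nat.add_mul_mod_self_left]
  set N : ℕ → ((i : Fin m) × (G ⧸ H i)) → ((i : Fin m) × (G ⧸ H i)) → ℕ :=
    fun k x y => if (y.1 : ℕ) = ((x.1 : ℕ) + k) % m then JLc H x.1 y.1 else 0 with hN
  have hiff : ∀ (k : ℕ), 1 ≤ k → k ≤ p - 1 → ∀ (a b : Fin m),
      ((b : ℕ) = ((a : ℕ) + k) % m ↔ (a : ℕ) = ((b : ℕ) + (p - k)) % m) := by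
    intro k hk1 hk2 a b
    constructor
    · intro hb
      rw [hb, modshift k hk1 hk2, Nat.mod_eq_of_lt a.2]
    · intro ha
      have hk1' : 1 ≤ p - k := by omega
      have hk2' : p - k ≤ p - 1 := by omega
      have hms := modshift (p - k) hk1' hk2' (b : ℕ)
      rw [show p - (p - k) = k from by omega] at hms
      rw [ha, hms, Nat.mod_eq_of_lt b.2]
  have sum_eval : ∀ (F : Fin m → ℕ) (j₀ : Fin m), (∀ l, l ≠ j₀ → F l = 0) →
      ∑ t : (i : Fin m) × (G ⧸ H i), F t.1 = Fintype.card (G ⧸ H j₀) * F j₀ := by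
    intro F j₀ hF
    rw [jl_sum_sigma_const]
    exact Finset.sum_eq_single j₀ (fun b _ hb => by rw [hF b hb, mul_zero])
      (fun h => absurd (Finset.mem_univ _) h)
  have hQ : ∀ j₀ : Fin m, Fintype.card (G ⧸ H j₀) * Nat.card (H j₀) = Fintype.card G := by
    intro j₀
    have hq := Subgroup.card_eq_card_quotient_mul_card_subgroup (H j₀)
    rw [Nat.card_eq_fintype_card] at hq
    rw [← Nat.card_eq_fintype_card (α := G ⧸ H j₀), ← hq]
  refine ⟨⟨N, ?_, ?_, ?_, ?_, ?_⟩, ?_, fun k _ _ x y => rfl⟩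
  · intro k _ _ g x y; rfl
  · intro k _ _ g x y; rfl
  · -- dual_symm
    intro k hk1 hk2 x y
    show (if (y.1 : ℕ) = ((x.1 : ℕ) + k) % m then JLc H x.1 y.1 else 0)
      = (if (x.1 : ℕ) = ((y.1 : ℕ) + (p - k)) % m then JLc H y.1 x.1 else 0)
    exact if_congr (hiff k hk1 hk2 x.1 y.1) (JLc_comm H x.1 y.1) rfl
  · -- fusion
    intro i j hi1 hi2 hj1 hj2 hij x y
    set j₀ : Fin m := σ j x.1 with hj₀
    have hFeq : ∀ t : (i : Fin m) × (G ⧸ H i), N j x t * N i t y =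
        (fun l : Fin m => (if (l : ℕ) = ((x.1 : ℕ) + j) % m then JLc H x.1 l else 0) *
          (if (y.1 : ℕ) = ((l : ℕ) + i) % m then JLc H l y.1 else 0)) t.1 := fun t => rfl
    have hzero : ∀ l : Fin m, l ≠ j₀ →
        (if (l : ℕ) = ((x.1 : ℕ) + j) % m then JLc H x.1 l else 0) *
          (if (y.1 : ℕ) = ((l : ℕ) + i) % m then JLc H l y.1 else 0) = 0 := by
      intro l hl
      rw [if_neg (fun h => hl (Fin.ext h)), zero_mul]
    calc ∑ t : (i : Fin m) × (G ⧸ H i), N j x t * N i t y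
        = ∑ t : (i : Fin m) × (G ⧸ H i),
          (fun l : Fin m => (if (l : ℕ) = ((x.1 : ℕ) + j) % m then JLc H x.1 l else 0) *
            (if (y.1 : ℕ) = ((l : ℕ) + i) % m then JLc H l y.1 else 0)) t.1 :=
          Finset.sum_congr rfl (fun t _ => hFeq t)
      _ = Fintype.card (G ⧸ H j₀) *
          ((if ((j₀ : Fin m) : ℕ) = ((x.1 : ℕ) + j) % m then JLc H x.1 j₀ else 0) *
            (if (y.1 : ℕ) = ((j₀ : ℕ) + i) % m then JLc H j₀ y.1 else 0)) :=
          sum_eval _ j₀ hzero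
      _ = n * N ((i + j) % p) x y := ?_
    rw [if_pos rfl]
    have hcond : ((j₀ : ℕ) + i) % m = ((x.1 : ℕ) + (i + j) % p) % m := modp i j (x.1 : ℕ)
    show Fintype.card (G ⧸ H j₀) * (JLc H x.1 j₀ *
        (if (y.1 : ℕ) = ((j₀ : ℕ) + i) % m then JLc H j₀ y.1 else 0))
      = n * (if (y.1 : ℕ) = ((x.1 : ℕ) + (i + j) % p) % m then JLc H x.1 y.1 else 0)
    by_cases hy : (y.1 : ℕ) = ((j₀ : ℕ) + i) % m
    · rw [if_pos hy, if_pos (by rw [hy, hcond])]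
      -- main computation
      have hyfin : y.1 = σ i j₀ := Fin.ext hy
      have hij1 : 1 ≤ (i + j) % p := Nat.one_le_iff_ne_zero.mpr hij
      have hij2 : (i + j) % p ≤ p - 1 := by
        have := Nat.mod_lt (i + j) (show 0 < p by omega); omega
      have hyfin2 : y.1 = σ ((i + j) % p) x.1 := Fin.ext (by rw [hy, hcond])
      set Q := Fintype.card (G ⧸ H j₀) with hQdef
      set A := JLc H x.1 j₀ with hA
      set B := JLc H j₀ y.1 with hB
      set C := JLc H x.1 y.1 with hC
      have kA : A * A * Fintype.card G = Nat.card (H x.1) * Nat.card (H j₀) :=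
        key x.1 j hj1 hj2
      have kB : B * B * Fintype.card G = Nat.card (H j₀) * Nat.card (H y.1) := by
        rw [hB, hyfin]; exact key j₀ i hi1 hi2
      have kC : C * C * Fintype.card G = Nat.card (H x.1) * Nat.card (H y.1) := by
        rw [hC, hyfin2]; exact key x.1 ((i + j) % p) hij1 hij2
      have kQ : Q * Nat.card (H j₀) = Fintype.card G := hQ j₀
      have hsq : (Q * (A * B)) * (Q * (A * B)) * (Fintype.card G * Fintype.card G)
          = (n * C) * (n * C) * (Fintype.card G * Fintype.card G) := by
        calc (Q * (A * B)) * (Q * (A * B)) * (Fintype.card G * Fintype.card G)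
            = (Q * Q) * ((A * A * Fintype.card G) * (B * B * Fintype.card G)) := by ring
          _ = (Q * Q) * ((Nat.card (H x.1) * Nat.card (H j₀)) *
              (Nat.card (H j₀) * Nat.card (H y.1))) := by rw [kA, kB]
          _ = (Q * Nat.card (H j₀)) * (Q * Nat.card (H j₀)) *
              (Nat.card (H x.1) * Nat.card (H y.1)) := by ring
          _ = Fintype.card G * Fintype.card G *
              (Nat.card (H x.1) * Nat.card (H y.1)) := by rw [kQ]
          _ = (n * n) * ((C * C * Fintype.card G) * Fintype.card G) := by
              rw [hnn, kC]; ring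
          _ = (n * C) * (n * C) * (Fintype.card G * Fintype.card G) := by ring
      have hsq2 := Nat.eq_of_mul_eq_mul_right (Nat.mul_pos hcG hcG) hsq
      exact Nat.mul_self_inj.mp hsq2
    · rw [if_neg hy, if_neg (fun h => hy (by rw [h, hcond]))]
      simp
  · -- fusion_dual
    intro i hi1 hi2 x y
    set j₀ : Fin m := σ i x.1 with hj₀
    have hi1' : 1 ≤ p - i := by omega
    have hi2' : p - i ≤ p - 1 := by omega
    have hFeq : ∀ t : (i : Fin m) × (G ⧸ H i), N i x t * N (p - i) t y =
        (fun l : Fin m => (if (l : ℕ) = ((x.1 : ℕ) + i) % m then JLc H x.1 l else 0) *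
          (if (y.1 : ℕ) = ((l : ℕ) + (p - i)) % m then JLc H l y.1 else 0)) t.1 := fun t => rfl
    have hzero : ∀ l : Fin m, l ≠ j₀ →
        (if (l : ℕ) = ((x.1 : ℕ) + i) % m then JLc H x.1 l else 0) *
          (if (y.1 : ℕ) = ((l : ℕ) + (p - i)) % m then JLc H l y.1 else 0) = 0 := by
      intro l hl
      rw [if_neg (fun h => hl (Fin.ext h)), zero_mul]
    have hmod : ((j₀ : ℕ) + (p - i)) % m = (x.1 : ℕ) := by
      rw [hσval, modshift i hi1 hi2, Nat.mod_eq_of_lt x.1.2]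
    calc ∑ t : (i : Fin m) × (G ⧸ H i), N i x t * N (p - i) t y
        = ∑ t : (i : Fin m) × (G ⧸ H i),
          (fun l : Fin m => (if (l : ℕ) = ((x.1 : ℕ) + i) % m then JLc H x.1 l else 0) *
            (if (y.1 : ℕ) = ((l : ℕ) + (p - i)) % m then JLc H l y.1 else 0)) t.1 :=
          Finset.sum_congr rfl (fun t _ => hFeq t)
      _ = Fintype.card (G ⧸ H j₀) *
          ((if ((j₀ : Fin m) : ℕ) = ((x.1 : ℕ) + i) % m then JLc H x.1 j₀ else 0) *
            (if (y.1 : ℕ) = ((j₀ : ℕ) + (p - i)) % m then JLc H j₀ y.1 else 0)) :=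
          sum_eval _ j₀ hzero
      _ = Nat.card {g : G // g • x = y} := ?_
    rw [if_pos rfl, hmod]
    obtain ⟨xi, xq⟩ := x
    obtain ⟨yi, yq⟩ := y
    by_cases hxy : (yi : ℕ) = ((xi : Fin m) : ℕ)
    · have hxy' : yi = xi := Fin.ext hxy
      subst hxy'
      rw [if_pos rfl]
      have hcard : Nat.card {g : G // g • (⟨yi, xq⟩ : (i : Fin m) × (G ⧸ H i)) = ⟨yi, yq⟩}
          = Nat.card (H yi) := by
        rw [← jl_card_smul_quot (H yi) xq yq]
        apply Nat.card_congr
        apply Equiv.subtypeEquivRight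
        intro g
        constructor
        · intro hg
          have : (⟨yi, g • xq⟩ : (i : Fin m) × (G ⧸ H i)) = ⟨yi, yq⟩ := hg
          simpa using this
        · intro hg
          show (⟨yi, g • xq⟩ : (i : Fin m) × (G ⧸ H i)) = ⟨yi, yq⟩
          rw [hg]
      rw [hcard]
      -- arithmetic: Q * (A * B) = h yi where B = JLc H j₀ yi-part
      have hyfin : (⟨(yi : Fin m), yq⟩ : (i : Fin m) × (G ⧸ H i)).1 = yi := rfl
      have hBA : JLc H j₀ yi = JLc H yi j₀ := JLc_comm H j₀ yi
      set Q := Fintype.card (G ⧸ H j₀) with hQdef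
      set A := JLc H yi j₀ with hA
      have kA : A * A * Fintype.card G = Nat.card (H yi) * Nat.card (H j₀) := by
        rw [hA, hj₀]; exact key yi i hi1 hi2
      have kQ : Q * Nat.card (H j₀) = Fintype.card G := hQ j₀
      have hsq : (Q * (A * A)) * Fintype.card G = Nat.card (H yi) * Fintype.card G := by
        calc (Q * (A * A)) * Fintype.card G = Q * (A * A * Fintype.card G) := by ring
          _ = Q * (Nat.card (H yi) * Nat.card (H j₀)) := by rw [kA]
          _ = (Q * Nat.card (H j₀)) * Nat.card (H yi) := by ring
          _ = Nat.card (H yi) * Fintype.card G := by rw [kQ]; ring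
      have := Nat.eq_of_mul_eq_mul_right hcG hsq
      rw [hBA]
      exact this
    · rw [if_neg hxy, mul_zero, mul_zero]
      have : IsEmpty {g : G // g • (⟨xi, xq⟩ : (i : Fin m) × (G ⧸ H i)) = ⟨yi, yq⟩} := by
        refine ⟨fun ⟨g, hg⟩ => hxy ?_⟩
        have : ((g • (⟨xi, xq⟩ : (i : Fin m) × (G ⧸ H i))).1 : Fin m) = yi :=
          congrArg Sigma.fst hg
        rw [show (g • (⟨xi, xq⟩ : (i : Fin m) × (G ⧸ H i))).1 = xi from rfl] at this
        rw [this]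
      rw [Nat.card_of_isEmpty]
  · -- irreducibility
    intro S hS hSmul hSN
    obtain ⟨⟨i₀, q₀⟩, hmem⟩ := hS
    have step1 : ∀ (i : Fin m) (q q' : G ⧸ H i),
        (⟨i, q⟩ : (i : Fin m) × (G ⧸ H i)) ∈ S → (⟨i, q'⟩ : (i : Fin m) × (G ⧸ H i)) ∈ S := by
      intro i q q' hq
      obtain ⟨a, rfl⟩ := QuotientGroup.mk_surjective q
      obtain ⟨b, rfl⟩ := QuotientGroup.mk_surjective q'
      have hact := hSmul (b * a⁻¹) _ hq
      have heq : ((b * a⁻¹) • (⟨i, (a : G ⧸ H i)⟩ : (i : Fin m) × (G ⧸ H i)))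
          = ⟨i, (b : G ⧸ H i)⟩ := by
        show (⟨i, ((b * a⁻¹ * a : G) : G ⧸ H i)⟩ : (i : Fin m) × (G ⧸ H i)) = _
        rw [inv_mul_cancel_right]
      rw [← heq]; exact hact
    have step2 : ∀ (i : Fin m) (q : G ⧸ H i),
        (⟨i, q⟩ : (i : Fin m) × (G ⧸ H i)) ∈ S →
        ∀ q' : G ⧸ H (σ 1 i), (⟨σ 1 i, q'⟩ : (i : Fin m) × (G ⧸ H i)) ∈ S := by
      intro i q hq q'
      refine hSN 1 le_rfl (by omega) ⟨i, q⟩ ⟨σ 1 i, q'⟩ hq ?_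
      show 0 < (if ((σ 1 i : Fin m) : ℕ) = ((i : ℕ) + 1) % m then JLc H i (σ 1 i) else 0)
      rw [if_pos rfl]
      exact cpos i 1 le_rfl (by omega)
    have step3 : ∀ d : ℕ, ∀ q : G ⧸ H (σ d i₀),
        (⟨σ d i₀, q⟩ : (i : Fin m) × (G ⧸ H i)) ∈ S := by
      intro d
      induction d with
      | zero =>
        have h0 : σ 0 i₀ = i₀ := Fin.ext (by
          rw [hσval]; simp [Nat.mod_eq_of_lt i₀.2])
        rw [h0]
        intro q
        exact step1 i₀ q₀ q hmem
      | succ d ih =>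
        have hs : σ (d + 1) i₀ = σ 1 (σ d i₀) := Fin.ext (by
          rw [hσval, hσval, hσval, Nat.mod_add_mod]
          congr 1)
        rw [hs]
        intro q
        exact step2 (σ d i₀) (((1 : G) : G ⧸ H (σ d i₀))) (ih _) q
    ext ⟨i, q⟩
    simp only [Set.mem_univ, iff_true]
    have hfin : σ ((m : ℕ) + (i : ℕ) - (i₀ : ℕ)) i₀ = i := Fin.ext (by
      rw [hσval]
      have h1 : (i₀ : ℕ) + ((m : ℕ) + (i : ℕ) - (i₀ : ℕ)) = m + (i : ℕ) := by
        have := i₀.2; omega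
      rw [h1, Nat.add_mod_left, Nat.mod_eq_of_lt i.2])
    have h4 := step3 ((m : ℕ) + (i : ℕ) - (i₀ : ℕ))
    rw [hfin] at h4
    exact h4 q
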